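/- For real numbers a, t with 1 < a < t, set m₁ = (a²−1)/(t²−1). Then I₁(a,a;t) + I₅(a,a;t) = 2·K̄(m₁)/√(t²−1), i.e. ∫_{-t}^{-a} √((a−z)/((t²−z²)(z²−1)(−z−a))) dz + ∫_{a}^{t} √((z−a)/((t²−z²)(z²−1)(z+a))) dz = (2/√(t²−1))·∫₀^{π/2} dθ/√(1 − (1−m₁)·sin²θ). -/

import Mathlib

open MeasureTheory intervalIntegral Real Filter Topology

/-- Period integral `I₁`. -/
noncomputable def I1 (a b t : ℝ) : ℝ :=
  ∫ z in (-t)..(-a), Real.sqrt ((b - z) / ((t ^ 2 - z ^ 2) * (z ^ 2 - 1) * (-z - a)))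

/-- Period integral `J₁`. -/
noncomputable def J1 (a b t : ℝ) : ℝ :=
  ∫ z in (-t)..(-a), Real.sqrt ((-z - a) / ((t ^ 2 - z ^ 2) * (z ^ 2 - 1) * (b - z)))

/-- Period integral `I₂`. -/
noncomputable def I2 (a b t : ℝ) : ℝ :=
  ∫ z in (-a)..(-1), Real.sqrt ((b - z) / ((t ^ 2 - z ^ 2) * (z ^ 2 - 1) * (z + a)))

/-- Period integral `J₂`. -/
noncomputable def J2 (a b t : ℝ) : ℝ :=
  ∫ z in (-a)..(-1), Real.sqrt ((z + a) / ((t ^ 2 - z ^ 2) * (z ^ 2 - 1) * (b - z)))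

/-- Period integral `I₄`. -/
noncomputable def I4 (a b t : ℝ) : ℝ :=
  ∫ z in (1:ℝ)..b, Real.sqrt ((b - z) / ((t ^ 2 - z ^ 2) * (z ^ 2 - 1) * (z + a)))

/-- Period integral `J₄`. -/
noncomputable def J4 (a b t : ℝ) : ℝ :=
  ∫ z in (1:ℝ)..b, Real.sqrt ((z + a) / ((t ^ 2 - z ^ 2) * (z ^ 2 - 1) * (b - z)))

/-- Period integral `I₅`. -/
noncomputable def I5 (a b t : ℝ) : ℝ :=
  ∫ z in b..t, Real.sqrt ((z - b) / ((t ^ 2 - z ^ 2) * (z ^ 2 - 1) * (z + a)))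

/-- Period integral `J₅`. -/
noncomputable def J5 (a b t : ℝ) : ℝ :=
  ∫ z in b..t, Real.sqrt ((z + a) / ((t ^ 2 - z ^ 2) * (z ^ 2 - 1) * (z - b)))

/-- The period quotient `Q(a,b;t)`. -/
noncomputable def Q (a b t : ℝ) : ℝ :=
  (I1 a b t + I5 a b t) / (I2 a b t + I4 a b t)
    - (J1 a b t + J5 a b t) / (J2 a b t + J4 a b t)

/-- Complete elliptic integral of the first kind `K(m)`. -/
noncomputable def Kint (m : ℝ) : ℝ :=
  ∫ θ in (0:ℝ)..(π / 2), 1 / Real.sqrt (1 - m * Real.sin θ ^ 2)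

/-- Complete elliptic integral of the second kind `E(m)`. -/
noncomputable def Eint (m : ℝ) : ℝ :=
  ∫ θ in (0:ℝ)..(π / 2), Real.sqrt (1 - m * Real.sin θ ^ 2)

section aux
variable (a t : ℝ) (ha : 1 < a) (hat : a < t)

noncomputable def gg (a t : ℝ) (θ : ℝ) : ℝ :=
  Real.sqrt (a ^ 2 + (t ^ 2 - a ^ 2) * Real.sin θ ^ 2)

noncomputable def gg' (a t : ℝ) (θ : ℝ) : ℝ :=
  (t ^ 2 - a ^ 2) * Real.sin θ * Real.cos θ / gg a t θ

include ha hat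

lemma hta : 0 < t ^ 2 - a ^ 2 := by nlinarith
lemma harg_nonneg (θ : ℝ) : 0 ≤ a ^ 2 + (t ^ 2 - a ^ 2) * Real.sin θ ^ 2 := by
  nlinarith [mul_nonneg (le_of_lt (hta a t ha hat)) (sq_nonneg (Real.sin θ))]

lemma gg_sq (θ : ℝ) : gg a t θ ^ 2 = a ^ 2 + (t ^ 2 - a ^ 2) * Real.sin θ ^ 2 := by
  rw [gg, Real.sq_sqrt (harg_nonneg a t ha hat θ)]

lemma gg_ge (θ : ℝ) : a ≤ gg a t θ := by
  rw [gg]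
  have h := Real.sqrt_le_sqrt (show a ^ 2 ≤ a ^ 2 + (t ^ 2 - a ^ 2) * Real.sin θ ^ 2 by
    nlinarith [mul_nonneg (le_of_lt (hta a t ha hat)) (sq_nonneg (Real.sin θ))])
  rwa [Real.sqrt_sq (by linarith : (0:ℝ) ≤ a)] at h

lemma gg_pos (θ : ℝ) : 0 < gg a t θ := lt_of_lt_of_le (by linarith) (gg_ge a t ha hat θ)

lemma gg_hasDeriv (θ : ℝ) : HasDerivAt (gg a t) (gg' a t θ) θ := by
  have hu : HasDerivAt (fun θ => a ^ 2 + (t ^ 2 - a ^ 2) * Real.sin θ ^ 2)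
      ((t ^ 2 - a ^ 2) * (2 * Real.sin θ ^ 1 * Real.cos θ)) θ := by
    exact (((Real.hasDerivAt_sin θ).pow 2).const_mul _).const_add _
  have hpos : a ^ 2 + (t ^ 2 - a ^ 2) * Real.sin θ ^ 2 ≠ 0 := by
    nlinarith [mul_nonneg (le_of_lt (hta a t ha hat)) (sq_nonneg (Real.sin θ))]
  have := (Real.hasDerivAt_sqrt hpos).comp θ hu
  refine (this : HasDerivAt (gg a t) _ θ).congr_deriv (Eq.symm ?_)
  have hg := gg_pos a t ha hat θ
  rw [gg'] ; rw [gg] at *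
  field_simp

lemma gg_strictMono : StrictMonoOn (gg a t) (Set.Icc 0 (π / 2)) := by
  intro x hx y hy hxy
  have hsx : 0 ≤ Real.sin x := Real.sin_nonneg_of_nonneg_of_le_pi hx.1 (by
    have := hx.2; have := Real.pi_pos; linarith)
  have hlt : Real.sin x < Real.sin y := by
    apply Real.strictMonoOn_sin ⟨by linarith [hx.1, Real.pi_pos], hx.2⟩
      ⟨by linarith [hy.1, Real.pi_pos], hy.2⟩ hxy
  have h2 : Real.sin x ^ 2 < Real.sin y ^ 2 := by nlinarith
  rw [gg, gg]
  apply Real.sqrt_lt_sqrt (harg_nonneg a t ha hat x)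
  nlinarith [hta a t ha hat]

lemma gg_image : gg a t '' Set.Ioo 0 (π / 2) = Set.Ioo a t := by
  apply Set.Subset.antisymm
  · rintro _ ⟨θ, hθ, rfl⟩
    have hc : 0 < Real.cos θ := Real.cos_pos_of_mem_Ioo ⟨by linarith [hθ.1, Real.pi_pos], hθ.2⟩
    have hs : 0 < Real.sin θ := Real.sin_pos_of_pos_of_lt_pi hθ.1 (by linarith [hθ.2, Real.pi_pos])
    have hs1 : Real.sin θ ^ 2 < 1 := by
      nlinarith [Real.sin_sq_add_cos_sq θ]
    constructor
    · have : a ^ 2 < gg a t θ ^ 2 := by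
        rw [gg_sq a t ha hat]
        nlinarith [mul_pos (hta a t ha hat) (mul_pos hs hs), sq_abs (Real.sin θ)]
      nlinarith [gg_pos a t ha hat θ]
    · have : gg a t θ ^ 2 < t ^ 2 := by
        rw [gg_sq a t ha hat]
        nlinarith [mul_pos (hta a t ha hat) (mul_pos hc hc), Real.sin_sq_add_cos_sq θ]
      nlinarith [gg_pos a t ha hat θ]
  · rintro z ⟨hz1, hz2⟩
    have hz0 : 0 < z := by linarith
    have hr0 : 0 < (z ^ 2 - a ^ 2) / (t ^ 2 - a ^ 2) := by
      apply div_pos (by nlinarith) (hta a t ha hat)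
    have hr1 : (z ^ 2 - a ^ 2) / (t ^ 2 - a ^ 2) < 1 := by
      rw [div_lt_one (hta a t ha hat)]; nlinarith
    set r := (z ^ 2 - a ^ 2) / (t ^ 2 - a ^ 2) with hr
    refine ⟨Real.arcsin (Real.sqrt r), ⟨?_, ?_⟩, ?_⟩
    · exact Real.arcsin_pos.2 (Real.sqrt_pos.2 hr0)
    · rw [Real.arcsin_lt_pi_div_two]
      rw [show (1:ℝ) = Real.sqrt 1 by simp]
      exact Real.sqrt_lt_sqrt (le_of_lt hr0) hr1
    · have hsr : Real.sin (Real.arcsin (Real.sqrt r)) = Real.sqrt r := by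
        apply Real.sin_arcsin (by linarith [Real.sqrt_nonneg r])
        rw [show (1:ℝ) = Real.sqrt 1 by simp]
        exact Real.sqrt_le_sqrt (le_of_lt hr1)
      rw [gg, hsr, Real.sq_sqrt (le_of_lt hr0), hr]
      rw [show a ^ 2 + (t ^ 2 - a ^ 2) * ((z ^ 2 - a ^ 2) / (t ^ 2 - a ^ 2)) = z ^ 2 by
        have h := ne_of_gt (hta a t ha hat); field_simp; ring]
      exact Real.sqrt_sq (le_of_lt hz0)


lemma gg_facts (θ : ℝ) (hθ : θ ∈ Set.Ioo 0 (π / 2)) :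
    t ^ 2 - gg a t θ ^ 2 = (t ^ 2 - a ^ 2) * Real.cos θ ^ 2 ∧
    gg a t θ ^ 2 - a ^ 2 = (t ^ 2 - a ^ 2) * Real.sin θ ^ 2 ∧
    gg a t θ ^ 2 - 1 = (t ^ 2 - 1) * (1 - (t ^ 2 - a ^ 2) / (t ^ 2 - 1) * Real.cos θ ^ 2) := by
  have hG2 := gg_sq a t ha hat θ
  have hp := Real.sin_sq_add_cos_sq θ
  have ht1' : (0:ℝ) < t ^ 2 - 1 := by nlinarith
  have hm' : (t ^ 2 - a ^ 2) / (t ^ 2 - 1) * (t ^ 2 - 1) = t ^ 2 - a ^ 2 :=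
    div_mul_cancel₀ _ (ne_of_gt ht1')
  refine ⟨by linear_combination -hG2 - (t ^ 2 - a ^ 2) * hp,
    by linear_combination hG2,
    by linear_combination hG2 + (t ^ 2 - a ^ 2) * hp + Real.cos θ ^ 2 * hm'⟩

lemma key_pointwise (θ : ℝ) (hθ : θ ∈ Set.Ioo 0 (π / 2)) (e : ℝ) (he : e = 1 ∨ e = -1) :
    |gg' a t θ| * Real.sqrt ((gg a t θ + e * a) /
        ((t ^ 2 - gg a t θ ^ 2) * (gg a t θ ^ 2 - 1) * (gg a t θ - e * a)))
      = (gg a t θ + e * a) /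
        (gg a t θ * Real.sqrt ((t ^ 2 - 1) * (1 - (t ^ 2 - a ^ 2) / (t ^ 2 - 1) * Real.cos θ ^ 2))) := by
  obtain ⟨ht2, hGa2, hD⟩ := gg_facts a t ha hat θ hθ
  have hc : 0 < Real.cos θ := Real.cos_pos_of_mem_Ioo ⟨by linarith [hθ.1, Real.pi_pos], hθ.2⟩
  have hs : 0 < Real.sin θ := Real.sin_pos_of_pos_of_lt_pi hθ.1 (by linarith [hθ.2, Real.pi_pos])
  have hG := gg_pos a t ha hat θ
  have hGa := gg_ge a t ha hat θ
  have hG1 : 1 < gg a t θ := lt_of_lt_of_le ha hGa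
  have hGin : a < gg a t θ := by
    have := gg_image a t ha hat ▸ Set.mem_image_of_mem _ hθ
    exact this.1
  set G := gg a t θ with hGdef
  have he2 : e ^ 2 = 1 := by rcases he with rfl | rfl <;> norm_num
  have hGm : 0 < G - e * a := by rcases he with rfl | rfl <;> [linarith; nlinarith]
  have hGp : 0 < G + e * a := by rcases he with rfl | rfl <;> [nlinarith; linarith]
  have hta' := hta a t ha hat
  have hsc : 0 < (t ^ 2 - a ^ 2) * Real.sin θ * Real.cos θ := by positivity
  have hGl : (0:ℝ) < G ^ 2 - 1 := by nlinarith
  have htG : (0:ℝ) < t ^ 2 - G ^ 2 := by rw [ht2]; positivity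
  have hfac : (G + e * a) * (G - e * a) = (t ^ 2 - a ^ 2) * Real.sin θ ^ 2 := by
    linear_combination hGa2 - a ^ 2 * he2
  have harg : (G + e * a) / ((t ^ 2 - G ^ 2) * (G ^ 2 - 1) * (G - e * a))
      = ((G + e * a) / ((t ^ 2 - a ^ 2) * Real.sin θ * Real.cos θ)) ^ 2 / (G ^ 2 - 1) := by
    rw [ht2]
    field_simp
    linear_combination -hfac
  have hDpos : (0:ℝ) < (t ^ 2 - 1) * (1 - (t ^ 2 - a ^ 2) / (t ^ 2 - 1) * Real.cos θ ^ 2) := by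
    rw [← hD]; exact hGl
  have hgg' : |gg' a t θ| = (t ^ 2 - a ^ 2) * Real.sin θ * Real.cos θ / G := by
    rw [gg', ← hGdef, abs_of_pos (by positivity)]
  rw [harg, Real.sqrt_div (sq_nonneg _), Real.sqrt_sq (le_of_lt (div_pos hGp hsc)),
    hgg', ← hD]
  have hsq : (0:ℝ) < Real.sqrt (G ^ 2 - 1) := Real.sqrt_pos.2 hGl
  field_simp

end aux


/-- `I₁(a,a;t) + I₅(a,a;t) = 2 K̄(m₁)/√(t²−1)` with `m₁ = (a²−1)/(t²−1)`. -/
theorem stmt14 (a t : ℝ) (ha : 1 < a) (hat : a < t) :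
    I1 a a t + I5 a a t
      = (2 / Real.sqrt (t ^ 2 - 1)) * Kint (1 - (a ^ 2 - 1) / (t ^ 2 - 1)) := by
  have ht1' : (0:ℝ) < t ^ 2 - 1 := by nlinarith
  have ha1 : (0:ℝ) < a ^ 2 - 1 := by nlinarith
  have hta' := hta a t ha hat
  set m : ℝ := (t ^ 2 - a ^ 2) / (t ^ 2 - 1) with hm
  have hm' : m * (t ^ 2 - 1) = t ^ 2 - a ^ 2 := div_mul_cancel₀ _ (ne_of_gt ht1')
  -- rewrite I1 via z ↦ -z
  have h1 : I1 a a t = ∫ z in Set.Ioo a t,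
      Real.sqrt ((z + a) / ((t ^ 2 - z ^ 2) * (z ^ 2 - 1) * (z - a))) := by
    rw [I1, ← intervalIntegral.integral_comp_neg
      (fun z => Real.sqrt ((a - z) / ((t ^ 2 - z ^ 2) * (z ^ 2 - 1) * (-z - a)))),
      intervalIntegral.integral_of_le (le_of_lt hat),
      MeasureTheory.integral_Ioc_eq_integral_Ioo]
    refine MeasureTheory.setIntegral_congr_fun measurableSet_Ioo fun z _ => ?_
    congr 1
    ring
  have h5 : I5 a a t = ∫ z in Set.Ioo a t,
      Real.sqrt ((z - a) / ((t ^ 2 - z ^ 2) * (z ^ 2 - 1) * (z + a))) := by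
    rw [I5, intervalIntegral.integral_of_le (le_of_lt hat),
      MeasureTheory.integral_Ioc_eq_integral_Ioo]
  -- change of variables
  have hcov : ∀ F : ℝ → ℝ, (∫ z in Set.Ioo a t, F z)
      = ∫ θ in Set.Ioo 0 (π / 2), |gg' a t θ| * F (gg a t θ) := by
    intro F
    rw [← gg_image a t ha hat,
      MeasureTheory.integral_image_eq_integral_abs_deriv_smul measurableSet_Ioo
        (fun θ _ => (gg_hasDeriv a t ha hat θ).hasDerivWithinAt)
        (((gg_strictMono a t ha hat).injOn).mono Set.Ioo_subset_Icc_self) F]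
    simp [smul_eq_mul]
  -- the two θ-integrands
  set c1 : ℝ → ℝ := fun θ => (gg a t θ + a) /
    (gg a t θ * Real.sqrt ((t ^ 2 - 1) * (1 - m * Real.cos θ ^ 2))) with hc1
  set c5 : ℝ → ℝ := fun θ => (gg a t θ - a) /
    (gg a t θ * Real.sqrt ((t ^ 2 - 1) * (1 - m * Real.cos θ ^ 2))) with hc5
  have hI1 : I1 a a t = ∫ θ in Set.Ioo 0 (π / 2), c1 θ := by
    rw [h1, hcov]
    refine MeasureTheory.setIntegral_congr_fun measurableSet_Ioo fun θ hθ => ?_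
    have h := key_pointwise a t ha hat θ hθ 1 (Or.inl rfl)
    rw [show gg a t θ + 1 * a = gg a t θ + a by ring,
      show gg a t θ - 1 * a = gg a t θ - a by ring] at h
    exact h
  have hI5 : I5 a a t = ∫ θ in Set.Ioo 0 (π / 2), c5 θ := by
    rw [h5, hcov]
    refine MeasureTheory.setIntegral_congr_fun measurableSet_Ioo fun θ hθ => ?_
    have h := key_pointwise a t ha hat θ hθ (-1) (Or.inr rfl)
    rw [show gg a t θ + -1 * a = gg a t θ - a by ring,
      show gg a t θ - -1 * a = gg a t θ + a by ring] at h
    exact h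
  -- continuity
  have hgcont : Continuous (gg a t) := by
    unfold gg; fun_prop
  have hDlb : ∀ θ : ℝ, a ^ 2 - 1 ≤ (t ^ 2 - 1) * (1 - m * Real.cos θ ^ 2) := by
    intro θ
    nlinarith [Real.cos_sq_le_one θ, sq_nonneg (Real.cos θ)]
  have hDcont : Continuous (fun θ => Real.sqrt ((t ^ 2 - 1) * (1 - m * Real.cos θ ^ 2))) := by
    fun_prop
  have hden : ∀ θ : ℝ, gg a t θ * Real.sqrt ((t ^ 2 - 1) * (1 - m * Real.cos θ ^ 2)) ≠ 0 := by
    intro θ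
    have h1 := gg_pos a t ha hat θ
    have h2 : 0 < Real.sqrt ((t ^ 2 - 1) * (1 - m * Real.cos θ ^ 2)) :=
      Real.sqrt_pos.2 (lt_of_lt_of_le ha1 (hDlb θ))
    positivity
  have hc1c : Continuous c1 := (hgcont.add continuous_const).div (hgcont.mul hDcont) hden
  have hc5c : Continuous c5 := (hgcont.sub continuous_const).div (hgcont.mul hDcont) hden
  have hint1 : IntegrableOn c1 (Set.Ioo 0 (π / 2)) :=
    (hc1c.integrableOn_Icc).mono_set Set.Ioo_subset_Icc_self
  have hint5 : IntegrableOn c5 (Set.Ioo 0 (π / 2)) :=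
    (hc5c.integrableOn_Icc).mono_set Set.Ioo_subset_Icc_self
  have hsum : ∀ θ : ℝ, c1 θ + c5 θ
      = (2 / Real.sqrt (t ^ 2 - 1)) * (1 / Real.sqrt (1 - m * Real.cos θ ^ 2)) := by
    intro θ
    have h1 := gg_pos a t ha hat θ
    have h2 : 0 < (t ^ 2 - 1) * (1 - m * Real.cos θ ^ 2) := lt_of_lt_of_le ha1 (hDlb θ)
    have h3 : 0 < 1 - m * Real.cos θ ^ 2 := by nlinarith
    have h4 : 0 < Real.sqrt (1 - m * Real.cos θ ^ 2) := Real.sqrt_pos.2 h3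
    have h5 : 0 < Real.sqrt (t ^ 2 - 1) := Real.sqrt_pos.2 ht1'
    simp only [hc1, hc5]
    rw [← add_div, Real.sqrt_mul (le_of_lt ht1'),
      show gg a t θ + a + (gg a t θ - a) = 2 * gg a t θ by ring]
    field_simp
  have hKarg : 1 - (a ^ 2 - 1) / (t ^ 2 - 1) = m := by
    rw [hm]; field_simp; ring
  have hpi2 : (0:ℝ) < π / 2 := by linarith [Real.pi_pos]
  have hswap : (∫ θ in Set.Ioo 0 (π / 2), 1 / Real.sqrt (1 - m * Real.cos θ ^ 2)) = Kint m := by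
    rw [← MeasureTheory.integral_Ioc_eq_integral_Ioo,
      ← intervalIntegral.integral_of_le (le_of_lt hpi2)]
    have h := intervalIntegral.integral_comp_sub_left (a := 0) (b := π / 2)
      (fun x => 1 / Real.sqrt (1 - m * Real.sin x ^ 2)) (π / 2)
    simp only [Real.sin_pi_div_two_sub, sub_self, sub_zero] at h
    rw [Kint, ← h]
  rw [hI1, hI5, ← MeasureTheory.integral_add hint1 hint5]
  simp only [hsum]
  rw [MeasureTheory.integral_const_mul, hKarg, hswap]
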